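/- (Monotonicity of # and ♮.) For all λ-terms M and N, if M ↠λ N (multi-step βη-reduction in λ), then M# ↠Λ$ N# and M♮ ↠Λ$ N♮ (multi-step reduction in Λ$). -/

import Mathlib

namespace Shift0

/-! ### The calculus Λ$ (de Bruijn representation) -/

/-- Terms of Λ$: variables, λ-abstractions, freeze `$(M)`, application, thaw `S₀(M)`. -/
inductive Tm : Type
  | var : Nat → Tm
  | lam : Tm → Tm
  | freeze : Tm → Tm
  | app : Tm → Tm → Tm
  | thaw : Tm → Tm
  deriving DecidableEq

namespace Tm

/-- Values of Λ$: variables, abstractions and frozen terms. -/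
inductive IsValue : Tm → Prop
  | var (n : Nat) : IsValue (.var n)
  | lam (M : Tm) : IsValue (.lam M)
  | freeze (M : Tm) : IsValue (.freeze M)

/-- Nonvalues of Λ$: applications and thawed terms. -/
inductive IsNonvalue : Tm → Prop
  | app (M N : Tm) : IsNonvalue (.app M N)
  | thaw (M : Tm) : IsNonvalue (.thaw M)

/-- Boolean value test. -/
def isVal : Tm → Bool
  | .var _ => true
  | .lam _ => true
  | .freeze _ => true
  | .app _ _ => false
  | .thaw _ => false

/-- Lift (shift) the free de Bruijn variables `≥ d` up by one. -/
def lift (d : Nat) : Tm → Tm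
  | .var n => if n < d then .var n else .var (n+1)
  | .lam M => .lam (lift (d+1) M)
  | .freeze M => .freeze (lift d M)
  | .app M N => .app (lift d M) (lift d N)
  | .thaw M => .thaw (lift d M)

/-- Capture-avoiding substitution `M[N/x]` (for the de Bruijn variable `x`);
the variables above `x` are shifted down by one. -/
def subst : Tm → Nat → Tm → Tm
  | .var n, x, N => if n = x then N else if n < x then .var n else .var (n-1)
  | .lam M, x, N => .lam (subst M (x+1) (N.lift 0))
  | .freeze M, x, N => .freeze (subst M x N)
  | .app M L, x, N => .app (subst M x N) (subst L x N)
  | .thaw M, x, N => .thaw (subst M x N)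

/-- `M $ N` is sugar for `$(N) M`. -/
def dol (M N : Tm) : Tm := .app (.freeze N) M

/-- `let x = M in N` is sugar for `S₀k.((λx.(k $ N)) $ M)`;
here `N` has the let-bound variable as de Bruijn index `0`. -/
def letIn (M N : Tm) : Tm :=
  .thaw (.lam (dol (.lam (dol (.var 1) (N.lift 1))) (M.lift 0)))

end Tm

/-- Bindable contexts `J ::= [] M | V [] | S₀([])`. -/
inductive JCtx : Type
  | appL : Tm → JCtx
  | appR : Tm → JCtx
  | thaw : JCtx

namespace JCtx

/-- Well-formedness: in `V []` the term `V` must be a value. -/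
def Wf : JCtx → Prop
  | .appL _ => True
  | .appR V => V.IsValue
  | .thaw => True

/-- Plugging a term into a bindable context. -/
def plug : JCtx → Tm → Tm
  | .appL N, M => .app M N
  | .appR V, M => .app V M
  | .thaw, M => .thaw M

/-- Lift the free variables `≥ d` of a bindable context. -/
def lift (d : Nat) : JCtx → JCtx
  | .appL N => .appL (N.lift d)
  | .appR V => .appR (V.lift d)
  | .thaw => .thaw

end JCtx

/-- Pure contexts `K ::= [] | J[K]`, represented as a list of bindable
contexts (head outermost). -/
abbrev KCtx : Type := List JCtx

/-- Plugging a term into a pure context. -/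
def KCtx.plug : KCtx → Tm → Tm
  | [], M => M
  | (J :: K), M => J.plug (KCtx.plug K M)

/-- Well-formedness of a pure context. -/
def KCtx.Wf (K : KCtx) : Prop := ∀ J ∈ K, JCtx.Wf J

/-- Lift the free variables `≥ d` of a pure context. -/
def KCtx.lift (d : Nat) (K : KCtx) : KCtx := K.map (JCtx.lift d)

namespace Tm

/-- The basic contractions of Λ$. -/
inductive Contr : Tm → Tm → Prop
  | betav (M V : Tm) : V.IsValue → Contr (.app (.lam M) V) (M.subst 0 V)
  | etav (V : Tm) : V.IsValue → Contr (.lam (.app (V.lift 0) (.var 0))) V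
  | dolv (V : Tm) : V.IsValue → Contr (.freeze V) (.lam (.app (.var 0) (V.lift 0)))
  | dolsh (V : Tm) : V.IsValue → Contr (.freeze (.thaw V)) V
  | shdol (M : Tm) : Contr (.thaw (.freeze M)) M
  | pure (V : Tm) : V.IsValue → Contr (.thaw (.lam (.app (.var 0) (V.lift 0)))) V
  | bind (J : JCtx) (P : Tm) : J.Wf → P.IsNonvalue →
      Contr (J.plug P) (letIn P ((J.lift 0).plug (.var 0)))

/-- One-step reduction of Λ$: closure of the contractions under arbitrary
contexts (including under binders). -/
inductive Step : Tm → Tm → Prop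
  | contr {M N : Tm} : Contr M N → Step M N
  | lam {M N : Tm} : Step M N → Step (.lam M) (.lam N)
  | freeze {M N : Tm} : Step M N → Step (.freeze M) (.freeze N)
  | appL {M N L : Tm} : Step M N → Step (.app M L) (.app N L)
  | appR {M N L : Tm} : Step M N → Step (.app L M) (.app L N)
  | thaw {M N : Tm} : Step M N → Step (.thaw M) (.thaw N)

/-- Multi-step reduction `↠Λ$`. -/
def Steps : Tm → Tm → Prop := Relation.ReflTransGen Step

/-- Convertibility `=Λ$`: the equivalence generated by reduction. -/
def Equiv : Tm → Tm → Prop := Relation.EqvGen Step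

end Tm

/-! ### The pure λ-calculus with βη -/

/-- Terms of the pure λ-calculus. -/
inductive Lam : Type
  | var : Nat → Lam
  | lam : Lam → Lam
  | app : Lam → Lam → Lam
  deriving DecidableEq

namespace Lam

/-- Lift the free de Bruijn variables `≥ d` up by one. -/
def lift (d : Nat) : Lam → Lam
  | .var n => if n < d then .var n else .var (n+1)
  | .lam M => .lam (lift (d+1) M)
  | .app M N => .app (lift d M) (lift d N)

/-- Capture-avoiding substitution `M[N/x]`. -/
def subst : Lam → Nat → Lam → Lam
  | .var n, x, N => if n = x then N else if n < x then .var n else .var (n-1)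
  | .lam M, x, N => .lam (subst M (x+1) (N.lift 0))
  | .app M L, x, N => .app (subst M x N) (subst L x N)

/-- β and η contractions. -/
inductive Contr : Lam → Lam → Prop
  | beta (M N : Lam) : Contr (.app (.lam M) N) (M.subst 0 N)
  | eta (M : Lam) : Contr (.lam (.app (M.lift 0) (.var 0))) M

/-- One-step βη-reduction, closed under arbitrary contexts. -/
inductive Step : Lam → Lam → Prop
  | contr {M N : Lam} : Contr M N → Step M N
  | lam {M N : Lam} : Step M N → Step (.lam M) (.lam N)
  | appL {M N L : Lam} : Step M N → Step (.app M L) (.app N L)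
  | appR {M N L : Lam} : Step M N → Step (.app L M) (.app L N)

/-- Multi-step βη-reduction `↠λ`. -/
def Steps : Lam → Lam → Prop := Relation.ReflTransGen Step

/-- βη-convertibility `=λ`. -/
def Equiv : Lam → Lam → Prop := Relation.EqvGen Step

end Lam

end Shift0

namespace Shift0

/-! ### The CPS translation `* : Λ$ → λ` and its value part `†` -/

mutual

/-- The CPS translation `M*`.  It is the full unfolding of the equations
`V* = λk.k V†`, `J[P]* = λk.P* (λx.(J[x]* k))`, `(V W)* = V† W†` and
`(S₀(V))* = V†`. -/
def cps : Tm → Lam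
  | .var n => .lam (.app (.var 0) (.var (n+1)))
  | .lam M => .lam (.app (.var 0) ((Lam.lam (cps M)).lift 0))
  | .freeze M => .lam (.app (.var 0) ((cps M).lift 0))
  | .app M N =>
      if M.isVal then
        if N.isVal then .app (cpsV M) (cpsV N)
        else
          .lam (.app ((cps N).lift 0)
            (.lam (.app (.app (((cpsV M).lift 0).lift 0) (.var 0)) (.var 1))))
      else
        if N.isVal then
          .lam (.app ((cps M).lift 0)
            (.lam (.app (.app (.var 0) (((cpsV N).lift 0).lift 0)) (.var 1))))
        else
          .lam (.app ((cps M).lift 0)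
            (.lam (.app
              (.lam (.app ((((cps N).lift 0).lift 0).lift 0)
                (.lam (.app (.app (.var 2) (.var 0)) (.var 1)))))
              (.var 1))))
  | .thaw M =>
      if M.isVal then cpsV M
      else .lam (.app ((cps M).lift 0) (.lam (.app (.var 0) (.var 1))))

/-- The value part `V†` of the CPS translation (junk on nonvalues). -/
def cpsV : Tm → Lam
  | .var n => .var n
  | .lam M => .lam (cps M)
  | .freeze M => cps M
  | .app _ _ => .var 0
  | .thaw _ => .var 0

end

/-! ### The direct-style translation `# : λ → Λ$` and its auxiliary `♮` -/

namespace Lam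

/-- Does the de Bruijn variable `x` occur free in the term? -/
def hasVar (x : Nat) : Lam → Bool
  | .var n => n = x
  | .lam M => hasVar (x+1) M
  | .app M N => hasVar x M || hasVar x N

/-- Shift the free de Bruijn variables `> d` down by one
(inverse of `lift d` on terms not containing `d` free). -/
def lower (d : Nat) : Lam → Lam
  | .var n => if d < n then .var (n-1) else .var n
  | .lam M => .lam (lower (d+1) M)
  | .app M N => .app (lower d M) (lower d N)

/-- Size of a λ-term. -/
def size : Lam → Nat
  | .var _ => 1
  | .lam M => size M + 1
  | .app M N => size M + size N + 1

theorem size_lower (d : Nat) (M : Lam) : (lower d M).size = M.size := by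
  induction M generalizing d with
  | var n => simp only [lower]; split <;> rfl
  | lam M ih => simp [lower, size, ih]
  | app M N ihM ihN => simp [lower, size, ihM, ihN]

end Lam

mutual

/-- The direct-style translation `M#`; the case `(λx.x N)# = N♮` (with
`x ∉ FV(N)`) is rendered by checking that de Bruijn variable `0` does not
occur in `N` and lowering the remaining variables. -/
def ds : Lam → Tm
  | .var n => .thaw (.var n)
  | .app M N => .app (nat M) (nat N)
  | .lam (.app (.var 0) N) =>
      if N.hasVar 0 then .thaw (.lam (.app (.var 0) (nat N)))
      else nat (N.lower 0)
  | .lam M => .thaw (.lam (ds M))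
termination_by M => M.size
decreasing_by all_goals simp [Lam.size, Lam.size_lower] <;> omega

/-- The auxiliary direct-style translation `M♮`. -/
def nat : Lam → Tm
  | .var n => .var n
  | .lam M => .lam (ds M)
  | .app M N => .freeze (.app (nat M) (nat N))
termination_by M => M.size
decreasing_by all_goals simp [Lam.size, Lam.size_lower] <;> omega

end

end Shift0

namespace Shift0

/-! ### Materzok's calculus λ$ -/

/-- Terms of λ$: variables, abstractions, applications, `S₀x.e`
(the body is under a binder) and `e $ e'`. -/
inductive LTm : Type
  | var : Nat → LTm
  | lam : LTm → LTm
  | app : LTm → LTm → LTm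
  | shift : LTm → LTm
  | dollar : LTm → LTm → LTm
  deriving DecidableEq

namespace LTm

/-- Values of λ$: variables and abstractions. -/
inductive IsValue : LTm → Prop
  | var (n : Nat) : IsValue (.var n)
  | lam (e : LTm) : IsValue (.lam e)

/-- Lift the free de Bruijn variables `≥ d` up by one. -/
def lift (d : Nat) : LTm → LTm
  | .var n => if n < d then .var n else .var (n+1)
  | .lam e => .lam (lift (d+1) e)
  | .app e f => .app (lift d e) (lift d f)
  | .shift e => .shift (lift (d+1) e)
  | .dollar e f => .dollar (lift d e) (lift d f)

/-- Capture-avoiding substitution `e[v/x]`. -/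
def subst : LTm → Nat → LTm → LTm
  | .var n, x, N => if n = x then N else if n < x then .var n else .var (n-1)
  | .lam e, x, N => .lam (subst e (x+1) (N.lift 0))
  | .app e f, x, N => .app (subst e x N) (subst f x N)
  | .shift e, x, N => .shift (subst e (x+1) (N.lift 0))
  | .dollar e f, x, N => .dollar (subst e x N) (subst f x N)

end LTm

/-- Pure contexts of λ$: `E ::= [] | E e | v E | E $ e`. -/
inductive ECtx : Type
  | hole : ECtx
  | appL : ECtx → LTm → ECtx
  | appR : LTm → ECtx → ECtx
  | dolL : ECtx → LTm → ECtx

namespace ECtx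

/-- Well-formedness: in `v E` the term `v` must be a value. -/
def Wf : ECtx → Prop
  | .hole => True
  | .appL E _ => E.Wf
  | .appR v E => v.IsValue ∧ E.Wf
  | .dolL E _ => E.Wf

/-- Plugging a term into a pure context of λ$. -/
def plug : ECtx → LTm → LTm
  | .hole, e => e
  | .appL E f, e => .app (E.plug e) f
  | .appR v E, e => .app v (E.plug e)
  | .dolL E f, e => .dollar (E.plug e) f

/-- Lift the free variables `≥ d` of a pure context. -/
def lift (d : Nat) : ECtx → ECtx
  | .hole => .hole
  | .appL E f => .appL (E.lift d) (f.lift d)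
  | .appR v E => .appR (v.lift d) (E.lift d)
  | .dolL E f => .dolL (E.lift d) (f.lift d)

end ECtx

namespace LTm

/-- The axioms of λ$. -/
inductive Ax : LTm → LTm → Prop
  | betav (e v : LTm) : v.IsValue → Ax (.app (.lam e) v) (e.subst 0 v)
  | etav (v : LTm) : v.IsValue → Ax (.lam (.app (v.lift 0) (.var 0))) v
  | dolv (v w : LTm) : v.IsValue → w.IsValue → Ax (.dollar v w) (.app v w)
  | dolE (v : LTm) (E : ECtx) (e : LTm) : v.IsValue → E.Wf →
      Ax (.dollar v (E.plug e))
         (.dollar (.lam (.dollar (v.lift 0) ((E.lift 0).plug (.var 0)))) e)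
  | betad (v e : LTm) : v.IsValue → Ax (.dollar v (.shift e)) (e.subst 0 v)
  | etad (e : LTm) : Ax (.shift (.dollar (.var 0) (e.lift 0))) e

/-- The axioms applied in an arbitrary context. -/
inductive AStep : LTm → LTm → Prop
  | ax {e f : LTm} : Ax e f → AStep e f
  | lam {e f : LTm} : AStep e f → AStep (.lam e) (.lam f)
  | appL {e f g : LTm} : AStep e f → AStep (.app e g) (.app f g)
  | appR {e f g : LTm} : AStep e f → AStep (.app g e) (.app g f)
  | shift {e f : LTm} : AStep e f → AStep (.shift e) (.shift f)
  | dolL {e f g : LTm} : AStep e f → AStep (.dollar e g) (.dollar f g)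
  | dolR {e f g : LTm} : AStep e f → AStep (.dollar g e) (.dollar g f)

/-- The equational theory `=λ$` generated by the axioms. -/
def Equiv : LTm → LTm → Prop := Relation.EqvGen AStep

end LTm

/-- The embedding `ι : λ$ → Λ$`. -/
def iota : LTm → Tm
  | .var n => .var n
  | .lam e => .lam (iota e)
  | .app e f => .app (iota e) (iota f)
  | .shift e => .thaw (.lam (iota e))
  | .dollar e f => .app (.freeze (iota f)) (iota e)

/-- The translation `π : Λ$ → λ$`. -/
def pi : Tm → LTm
  | .var n => .var n
  | .lam M => .lam (pi M)
  | .freeze M => .lam (.dollar (.var 0) ((pi M).lift 0))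
  | .app M N => .app (pi M) (pi N)
  | .thaw M => .app (.lam (.shift (.app (.var 1) (.var 0)))) (pi M)

/-- Materzok's CPS translation `⟦·⟧ : λ$ → λ` (with the value translation
`⟪x⟫ = x`, `⟪λx.e⟫ = λx.⟦e⟧` inlined). -/
def mcps : LTm → Lam
  | .var n => .lam (.app (.var 0) (.var (n+1)))
  | .lam e => .lam (.app (.var 0) ((Lam.lam (mcps e)).lift 0))
  | .app e f => .lam (.app ((mcps e).lift 0)
      (.lam (.app (((mcps f).lift 0).lift 0)
        (.lam (.app (.app (.var 1) (.var 0)) (.var 2))))))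
  | .shift e => .lam (mcps e)
  | .dollar e f => .lam (.app ((mcps e).lift 0)
      (.lam (.app (.app (((mcps f).lift 0).lift 0) (.var 0)) (.var 1))))

end Shift0
namespace Shift0
namespace Lam

theorem size_pos (M : Lam) : 0 < M.size := by cases M <;> simp [size]

theorem lift_lift (i j : Nat) (M : Lam) (h : i ≤ j) :
    lift i (lift j M) = lift (j + 1) (lift i M) := by
  induction M generalizing i j with
  | var n =>
      simp only [lift]
      split_ifs <;> simp only [lift] <;> split_ifs <;>
        first | rfl | (simp only [Lam.var.injEq]; omega) | (exfalso; omega)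
  | lam M ih => simp only [lift, Lam.lam.injEq]; exact ih _ _ (by omega)
  | app M N ihM ihN => simp only [lift, Lam.app.injEq]; exact ⟨ihM _ _ h, ihN _ _ h⟩

theorem hasVar_lift_lt (x d : Nat) (M : Lam) (h : x < d) :
    hasVar x (lift d M) = hasVar x M := by
  induction M generalizing x d with
  | var n =>
      simp only [lift]
      split_ifs <;> simp only [hasVar, decide_eq_decide] <;> omega
  | lam M ih => simp only [lift, hasVar]; exact ih _ _ (by omega)
  | app M N ihM ihN => simp only [lift, hasVar, ihM _ _ h, ihN _ _ h]

theorem hasVar_lift_ge (x d : Nat) (M : Lam) (h : d ≤ x) :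
    hasVar (x + 1) (lift d M) = hasVar x M := by
  induction M generalizing x d with
  | var n =>
      simp only [lift]
      split_ifs <;> simp only [hasVar, decide_eq_decide] <;> omega
  | lam M ih => simp only [lift, hasVar]; exact ih _ _ (by omega)
  | app M N ihM ihN => simp only [lift, hasVar, ihM _ _ h, ihN _ _ h]

theorem hasVar_lift_self (d : Nat) (M : Lam) : hasVar d (lift d M) = false := by
  induction M generalizing d with
  | var n =>
      simp only [lift]
      split_ifs <;> simp only [hasVar, decide_eq_false_iff_not] <;> omega
  | lam M ih => simp only [lift, hasVar]; exact ih _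
  | app M N ihM ihN => simp [lift, hasVar, ihM, ihN]

theorem lower_lift (d : Nat) (M : Lam) : lower d (lift d M) = M := by
  induction M generalizing d with
  | var n =>
      simp only [lift]
      split_ifs <;> simp only [lower] <;> split_ifs <;>
        first | rfl | (simp only [Lam.var.injEq]; omega) | (exfalso; omega)
  | lam M ih => simp only [lift, lower, Lam.lam.injEq]; exact ih _
  | app M N ihM ihN => simp [lift, lower, ihM, ihN]

theorem lift_lower (d : Nat) (M : Lam) (h : hasVar d M = false) :
    lift d (lower d M) = M := by
  induction M generalizing d with
  | var n =>
      simp only [hasVar, decide_eq_false_iff_not] at h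
      simp only [lower]
      split_ifs <;> simp only [lift] <;> split_ifs <;>
        first | rfl | (simp only [Lam.var.injEq]; omega) | (exfalso; omega)
  | lam M ih =>
      simp only [hasVar] at h
      simp only [lower, lift, Lam.lam.injEq]; exact ih _ h
  | app M N ihM ihN =>
      simp only [hasVar, Bool.or_eq_false_iff] at h
      simp [lower, lift, ihM _ h.1, ihN _ h.2]

theorem subst_lift (M : Lam) (d x : Nat) (N : Lam) (h : d ≤ x) :
    (lift d M).subst (x + 1) (lift d N) = lift d (M.subst x N) := by
  induction M generalizing d x N with
  | var n =>
      simp only [lift, subst]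
      split_ifs <;> simp only [subst, lift] <;> split_ifs <;>
        first | rfl | (simp only [Lam.var.injEq]; omega) | (exfalso; omega)
  | lam M ih =>
      simp only [lift, subst, Lam.lam.injEq]
      rw [lift_lift 0 d N (Nat.zero_le d)]
      exact ih _ _ _ (by omega)
  | app M L ihM ihL => simp [lift, subst, ihM _ _ _ h, ihL _ _ _ h]

theorem hasVar_subst_lt (M : Lam) (x y : Nat) (N : Lam) (h : x < y)
    (hM : hasVar x M = false) (hN : hasVar x N = false) :
    hasVar x (M.subst y N) = false := by
  induction M generalizing x y N with
  | var n =>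
      simp only [hasVar, decide_eq_false_iff_not] at hM
      simp only [subst]
      split_ifs <;> first
        | exact hN
        | (simp only [hasVar, decide_eq_false_iff_not]; omega)
  | lam M ih =>
      simp only [hasVar] at hM
      simp only [subst, hasVar]
      exact ih _ _ _ (by omega) hM (by rw [hasVar_lift_ge x 0 N (Nat.zero_le x)]; exact hN)
  | app M L ihM ihL =>
      simp only [hasVar, Bool.or_eq_false_iff] at hM
      simp [subst, hasVar, ihM _ _ _ h hM.1 hN, ihL _ _ _ h hM.2 hN]

theorem hasVar_subst_ge (M : Lam) (x y : Nat) (N : Lam) (h : y ≤ x)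
    (hM : hasVar (x + 1) M = false) (hN : hasVar x N = false) :
    hasVar x (M.subst y N) = false := by
  induction M generalizing x y N with
  | var n =>
      simp only [hasVar, decide_eq_false_iff_not] at hM
      simp only [subst]
      split_ifs <;> first
        | exact hN
        | (simp only [hasVar, decide_eq_false_iff_not]; omega)
  | lam M ih =>
      simp only [hasVar] at hM
      simp only [subst, hasVar]
      exact ih _ _ _ (by omega) hM (by rw [hasVar_lift_ge x 0 N (Nat.zero_le x)]; exact hN)
  | app M L ihM ihL =>
      simp only [hasVar, Bool.or_eq_false_iff] at hM
      simp [subst, hasVar, ihM _ _ _ h hM.1 hN, ihL _ _ _ h hM.2 hN]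

theorem lift_lower_comm (i j : Nat) (M : Lam) (h : i ≤ j) :
    lower (j + 1) (lift i M) = lift i (lower j M) := by
  induction M generalizing i j with
  | var n =>
      simp only [lift, lower]
      split_ifs <;> simp only [lift, lower] <;> split_ifs <;>
        first | rfl | (simp only [Lam.var.injEq]; omega) | (exfalso; omega)
  | lam M ih => simp only [lift, lower, Lam.lam.injEq]; exact ih _ _ (by omega)
  | app M N ihM ihN => simp [lift, lower, ihM _ _ h, ihN _ _ h]

theorem subst_lower (M : Lam) (x d : Nat) (N : Lam) (h : x ≤ d) :
    lower d (M.subst x N) = (lower (d + 1) M).subst x (lower d N) := by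
  induction M generalizing x d N with
  | var n =>
      simp only [subst, lower]
      split_ifs <;> simp only [subst, lower] <;> split_ifs <;>
        first | rfl | (simp only [Lam.var.injEq]; omega) | (exfalso; omega)
  | lam M ih =>
      simp only [subst, lower, Lam.lam.injEq]
      rw [ih _ _ _ (by omega), lift_lower_comm 0 d N (Nat.zero_le d)]
  | app M L ihM ihL => simp [subst, lower, ihM _ _ _ h, ihL _ _ _ h]

theorem step_hasVar {M N : Lam} (h : Step M N) :
    ∀ x, hasVar x M = false → hasVar x N = false := by
  induction h with
  | contr c =>
      cases c with
      | beta A B =>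
          intro x hx
          simp only [hasVar, Bool.or_eq_false_iff] at hx
          exact hasVar_subst_ge A x 0 B (Nat.zero_le x) hx.1 hx.2
      | eta _ =>
          rename_i A
          intro x hx
          simp only [hasVar, Bool.or_eq_false_iff] at hx
          rw [← hasVar_lift_ge x 0 A (Nat.zero_le x)]
          exact hx.1
  | lam _ ih => intro x hx; simp only [hasVar] at hx ⊢; exact ih _ hx
  | appL _ ih =>
      intro x hx; simp only [hasVar, Bool.or_eq_false_iff] at hx ⊢
      exact ⟨ih _ hx.1, hx.2⟩
  | appR _ ih =>
      intro x hx; simp only [hasVar, Bool.or_eq_false_iff] at hx ⊢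
      exact ⟨hx.1, ih _ hx.2⟩

theorem step_lower {M N : Lam} (h : Step M N) (d : Nat) :
    Step (lower d M) (lower d N) := by
  induction h generalizing d with
  | contr c =>
      cases c with
      | beta A B =>
          simp only [lower]
          rw [subst_lower A 0 d B (Nat.zero_le d)]
          exact Step.contr (Contr.beta _ _)
      | eta _ =>
          rename_i A
          have h0 : lower (d + 1) (Lam.var 0) = Lam.var 0 := by simp [lower]
          simp only [lower, h0]
          rw [lift_lower_comm 0 d A (Nat.zero_le d)]
          exact Step.contr (Contr.eta _)
  | lam _ ih => exact Step.lam (ih _)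
  | appL _ ih => exact Step.appL (ih _)
  | appR _ ih => exact Step.appR (ih _)

theorem var_no_step {n : Nat} {N : Lam} (h : Step (.var n) N) : False := by
  cases h with | contr c => cases c

end Lam
end Shift0
namespace Shift0

namespace Tm

theorem stepsLam {M N : Tm} (h : Steps M N) : Steps (.lam M) (.lam N) :=
  Relation.ReflTransGen.lift (fun x => Tm.lam x) (fun _ _ h => Step.lam h) _ _ h

theorem stepsFreeze {M N : Tm} (h : Steps M N) : Steps (.freeze M) (.freeze N) :=
  Relation.ReflTransGen.lift (fun x => Tm.freeze x) (fun _ _ h => Step.freeze h) _ _ h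

theorem stepsThaw {M N : Tm} (h : Steps M N) : Steps (.thaw M) (.thaw N) :=
  Relation.ReflTransGen.lift (fun x => Tm.thaw x) (fun _ _ h => Step.thaw h) _ _ h

theorem stepsApp {M M' N N' : Tm} (h1 : Steps M M') (h2 : Steps N N') :
    Steps (.app M N) (.app M' N') :=
  Relation.ReflTransGen.trans
    (Relation.ReflTransGen.lift (fun x => Tm.app x N) (fun _ _ h => Step.appL h) _ _ h1)
    (Relation.ReflTransGen.lift (fun x => Tm.app M' x) (fun _ _ h => Step.appR h) _ _ h2)

end Tm

theorem nat_isValue (M : Lam) : (nat M).IsValue := by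
  cases M with
  | var n => simp only [nat]; exact Tm.IsValue.var n
  | lam M => simp only [nat]; exact Tm.IsValue.lam _
  | app M N => simp only [nat]; exact Tm.IsValue.freeze _

theorem ds_lam_eq (A : Lam) (h : ∀ B, A = .app (.var 0) B → B.hasVar 0 = true) :
    ds (.lam A) = .thaw (.lam (ds A)) := by
  match A with
  | .var n => simp [ds]
  | .lam _ => simp [ds]
  | .app (.var 0) B =>
      have hB := h B rfl
      simp [ds, hB, nat]
  | .app (.var (k+1)) B => simp [ds]
  | .app (.lam _) B => simp [ds]
  | .app (.app _ _) B => simp [ds]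

theorem dsnat_lift : ∀ n (M : Lam), M.size ≤ n →
    (∀ d, ds (M.lift d) = (ds M).lift d) ∧ (∀ d, nat (M.lift d) = (nat M).lift d) := by
  intro n
  induction n with
  | zero => intro M h; have := Lam.size_pos M; omega
  | succ n ih =>
    intro M hM
    cases M with
    | var m =>
        constructor <;> intro d <;> simp only [Lam.lift] <;> split_ifs with hc <;>
          simp [ds, nat, Tm.lift, hc] <;> omega
    | app A B =>
        have hA : A.size ≤ n := by simp [Lam.size] at hM; omega
        have hB : B.size ≤ n := by simp [Lam.size] at hM; omega
        constructor <;> intro d <;>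
          simp [Lam.lift, ds, nat, Tm.lift, (ih A hA).2, (ih B hB).2]
    | lam A =>
        have hA : A.size ≤ n := by simp [Lam.size] at hM; omega
        have hnat : ∀ d, nat ((Lam.lam A).lift d) = (nat (.lam A)).lift d := by
          intro d
          simp [Lam.lift, nat, Tm.lift, (ih A hA).1]
        refine ⟨?_, hnat⟩
        intro d
        by_cases hsp : ∃ B, A = .app (.var 0) B ∧ B.hasVar 0 = false
        · obtain ⟨B, rfl, hB⟩ := hsp
          have hBsz : B.size ≤ n := by simp [Lam.size] at hM; omega
          have hlow : (B.lower 0).size ≤ n := by rw [Lam.size_lower]; exact hBsz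
          have h1 : (Lam.app (.var 0) B).lift (d+1) = .app (.var 0) (B.lift (d+1)) := by
            simp [Lam.lift]
          have h2 : (B.lift (d+1)).hasVar 0 = false := by
            rw [Lam.hasVar_lift_lt 0 (d+1) B (by omega)]; exact hB
          have h3 : (B.lift (d+1)).lower 0 = (B.lower 0).lift d := by
            conv_lhs => rw [← Lam.lift_lower 0 B hB]
            rw [← Lam.lift_lift 0 d (B.lower 0) (Nat.zero_le d), Lam.lower_lift]
          calc ds ((Lam.lam (.app (.var 0) B)).lift d)
              = ds (.lam (.app (.var 0) (B.lift (d+1)))) := by simp [Lam.lift]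
            _ = nat ((B.lift (d+1)).lower 0) := by simp [ds, h2]
            _ = nat ((B.lower 0).lift d) := by rw [h3]
            _ = (nat (B.lower 0)).lift d := (ih _ hlow).2 d
            _ = (ds (.lam (.app (.var 0) B))).lift d := by simp [ds, hB]
        · have h : ∀ B, A = .app (.var 0) B → B.hasVar 0 = true := by
            intro B hAB
            by_contra hf
            exact hsp ⟨B, hAB, by revert hf; cases B.hasVar 0 <;> simp⟩
          have h' : ∀ B', A.lift (d+1) = .app (.var 0) B' → B'.hasVar 0 = true := by
            intro B' hEq
            cases A with
            | var m => simp only [Lam.lift] at hEq; split at hEq <;> simp_all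
            | lam _ => simp [Lam.lift] at hEq
            | app H B =>
                simp only [Lam.lift, Lam.app.injEq] at hEq
                obtain ⟨hH, hB'⟩ := hEq
                have hH0 : H = .var 0 := by
                  cases H with
                  | var k => simp only [Lam.lift] at hH; split at hH <;> simp_all
                  | lam _ => simp [Lam.lift] at hH
                  | app _ _ => simp [Lam.lift] at hH
                subst hH0
                subst hB'
                rw [Lam.hasVar_lift_lt 0 (d+1) B (by omega)]
                exact h B rfl
          have e1 : (Lam.lam A).lift d = .lam (A.lift (d+1)) := by simp [Lam.lift]
          rw [e1, ds_lam_eq _ h', ds_lam_eq _ h, (ih A hA).1 (d+1)]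
          simp [Tm.lift]

theorem ds_lift (M : Lam) (d : Nat) : ds (M.lift d) = (ds M).lift d :=
  (dsnat_lift M.size M le_rfl).1 d

theorem nat_lift (M : Lam) (d : Nat) : nat (M.lift d) = (nat M).lift d :=
  (dsnat_lift M.size M le_rfl).2 d

end Shift0
namespace Shift0

theorem nat_eq_lift_lower (B : Lam) (hB : B.hasVar 0 = false) :
    nat B = (nat (B.lower 0)).lift 0 := by
  conv_lhs => rw [← Lam.lift_lower 0 B hB]
  exact nat_lift (B.lower 0) 0

theorem thaw_lam_ds (A : Lam) : Tm.Steps (.thaw (.lam (ds A))) (ds (.lam A)) := by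
  by_cases hsp : ∃ B, A = .app (.var 0) B ∧ B.hasVar 0 = false
  · obtain ⟨B, rfl, hB⟩ := hsp
    have e1 : ds (Lam.app (.var 0) B) = .app (.var 0) (nat B) := by simp [ds, nat]
    have e2 : ds (Lam.lam (.app (.var 0) B)) = nat (B.lower 0) := by simp [ds, hB]
    rw [e1, e2, nat_eq_lift_lower B hB]
    exact Relation.ReflTransGen.single
      (Tm.Step.contr (Tm.Contr.pure _ (nat_isValue _)))
  · have h : ∀ B, A = .app (.var 0) B → B.hasVar 0 = true := by
      intro B hAB
      by_contra hf
      exact hsp ⟨B, hAB, by revert hf; cases B.hasVar 0 <;> simp⟩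
    rw [ds_lam_eq _ h]
    exact Relation.ReflTransGen.refl

theorem thaw_nat (A : Lam) : Tm.Steps (.thaw (nat A)) (ds A) := by
  cases A with
  | var n => simp only [nat, ds]; exact Relation.ReflTransGen.refl
  | lam M => simp only [nat]; exact thaw_lam_ds M
  | app M N =>
      simp only [nat, ds]
      exact Relation.ReflTransGen.single (Tm.Step.contr (Tm.Contr.shdol _))

theorem freeze_ds (A : Lam) : Tm.Steps (.freeze (ds A)) (nat A) := by
  cases A with
  | var n =>
      simp only [nat, ds]
      exact Relation.ReflTransGen.single
        (Tm.Step.contr (Tm.Contr.dolsh _ (Tm.IsValue.var n)))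
  | app M N => simp only [nat, ds]; exact Relation.ReflTransGen.refl
  | lam A =>
      by_cases hsp : ∃ B, A = .app (.var 0) B ∧ B.hasVar 0 = false
      · obtain ⟨B, rfl, hB⟩ := hsp
        have e2 : ds (Lam.lam (.app (.var 0) B)) = nat (B.lower 0) := by simp [ds, hB]
        have e3 : nat (Lam.lam (.app (.var 0) B)) = .lam (.app (.var 0) (nat B)) := by
          simp [nat, ds]
        rw [e2, e3, nat_eq_lift_lower B hB]
        exact Relation.ReflTransGen.single
          (Tm.Step.contr (Tm.Contr.dolv _ (nat_isValue _)))
      · have h : ∀ B, A = .app (.var 0) B → B.hasVar 0 = true := by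
          intro B hAB
          by_contra hf
          exact hsp ⟨B, hAB, by revert hf; cases B.hasVar 0 <;> simp⟩
        rw [ds_lam_eq _ h]
        have : nat (Lam.lam A) = .lam (ds A) := by simp [nat]
        rw [this]
        exact Relation.ReflTransGen.single
          (Tm.Step.contr (Tm.Contr.dolsh _ (Tm.IsValue.lam _)))

end Shift0
namespace Shift0

theorem subst_mono : ∀ n (M : Lam), M.size ≤ n → ∀ (x : Nat) (N : Lam),
    Tm.Steps ((ds M).subst x (nat N)) (ds (M.subst x N)) ∧
    Tm.Steps ((nat M).subst x (nat N)) (nat (M.subst x N)) := by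
  intro n
  induction n with
  | zero => intro M h; have := Lam.size_pos M; omega
  | succ n ih =>
    intro M hM x N
    cases M with
    | var m =>
        by_cases hmx : m = x
        · subst hmx
          constructor
          · have e1 : (ds (Lam.var m)).subst m (nat N) = .thaw (nat N) := by
              simp [ds, Tm.subst]
            have e2 : (Lam.var m).subst m N = N := by simp [Lam.subst]
            rw [e1, e2]
            exact thaw_nat N
          · have e1 : (nat (Lam.var m)).subst m (nat N) = nat N := by
              simp [nat, Tm.subst]
            have e2 : (Lam.var m).subst m N = N := by simp [Lam.subst]
            rw [e1, e2]
            exact Relation.ReflTransGen.refl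
        · constructor <;>
          · simp only [ds, nat, Tm.subst, Lam.subst, if_neg hmx]
            split_ifs <;> simp [ds, nat] <;> exact Relation.ReflTransGen.refl
    | app A B =>
        have hA : A.size ≤ n := by simp [Lam.size] at hM; omega
        have hB : B.size ≤ n := by simp [Lam.size] at hM; omega
        constructor
        · simp only [ds, Lam.subst, Tm.subst]
          exact Tm.stepsApp ((ih A hA x N).2) ((ih B hB x N).2)
        · simp only [nat, Lam.subst, Tm.subst, ds]
          exact Tm.stepsFreeze
            (Tm.stepsApp ((ih A hA x N).2) ((ih B hB x N).2))
    | lam A =>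
        have hA : A.size ≤ n := by simp [Lam.size] at hM; omega
        have hnat : Tm.Steps ((nat (Lam.lam A)).subst x (nat N))
            (nat ((Lam.lam A).subst x N)) := by
          have e1 : (nat (Lam.lam A)).subst x (nat N)
              = .lam ((ds A).subst (x+1) (nat (N.lift 0))) := by
            simp only [nat, Tm.subst, nat_lift]
          have e2 : nat ((Lam.lam A).subst x N)
              = .lam (ds (A.subst (x+1) (N.lift 0))) := by
            simp only [Lam.subst, nat]
          rw [e1, e2]
          exact Tm.stepsLam ((ih A hA (x+1) (N.lift 0)).1)
        refine ⟨?_, hnat⟩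
        by_cases hsp : ∃ B, A = .app (.var 0) B ∧ B.hasVar 0 = false
        · obtain ⟨B, rfl, hB⟩ := hsp
          have hBsz : (B.lower 0).size ≤ n := by
            rw [Lam.size_lower]; simp [Lam.size] at hM; omega
          have hB' : (B.subst (x+1) (N.lift 0)).hasVar 0 = false :=
            Lam.hasVar_subst_lt B 0 (x+1) _ (by omega) hB (Lam.hasVar_lift_self 0 N)
          have eSub : (Lam.lam (.app (.var 0) B)).subst x N
              = .lam (.app (.var 0) (B.subst (x+1) (N.lift 0))) := by
            simp [Lam.subst]
          have eKey : (B.lower 0).subst x N = (B.subst (x+1) (N.lift 0)).lower 0 := by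
            conv_rhs => rw [← Lam.lift_lower 0 B hB]
            rw [Lam.subst_lift (B.lower 0) 0 x N (Nat.zero_le x), Lam.lower_lift]
          have e1 : (ds (Lam.lam (.app (.var 0) B))).subst x (nat N)
              = (nat (B.lower 0)).subst x (nat N) := by simp [ds, hB]
          have e2 : ds ((Lam.lam (.app (.var 0) B)).subst x N)
              = nat ((B.subst (x+1) (N.lift 0)).lower 0) := by
            rw [eSub]; simp [ds, hB']
          rw [e1, e2, ← eKey]
          exact (ih _ hBsz x N).2
        · have h : ∀ B, A = .app (.var 0) B → B.hasVar 0 = true := by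
            intro B hAB
            by_contra hf
            exact hsp ⟨B, hAB, by revert hf; cases B.hasVar 0 <;> simp⟩
          have e1 : (ds (Lam.lam A)).subst x (nat N)
              = .thaw (.lam ((ds A).subst (x+1) (nat (N.lift 0)))) := by
            rw [ds_lam_eq _ h]; simp only [Tm.subst, nat_lift]
          have e2 : (Lam.lam A).subst x N = .lam (A.subst (x+1) (N.lift 0)) := by
            simp [Lam.subst]
          rw [e1, e2]
          exact Relation.ReflTransGen.trans
            (Tm.stepsThaw (Tm.stepsLam ((ih A hA (x+1) (N.lift 0)).1)))
            (thaw_lam_ds _)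

end Shift0
namespace Shift0

theorem mono_step : ∀ n (M N : Lam), M.size ≤ n → Lam.Step M N →
    Tm.Steps (ds M) (ds N) ∧ Tm.Steps (nat M) (nat N) := by
  intro n
  induction n with
  | zero => intro M N h; have := Lam.size_pos M; omega
  | succ n ih =>
    intro M N hM h
    cases h with
    | contr c =>
        cases c with
        | beta A B =>
            have e1 : ds (Lam.app (.lam A) B) = .app (.lam (ds A)) (nat B) := by
              simp [ds, nat]
            have e2 : nat (Lam.app (.lam A) B) = .freeze (ds (Lam.app (.lam A) B)) := by
              simp [ds, nat]
            have dsPart : Tm.Steps (ds (Lam.app (.lam A) B)) (ds (A.subst 0 B)) := by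
              rw [e1]
              exact Relation.ReflTransGen.trans
                (Relation.ReflTransGen.single
                  (Tm.Step.contr (Tm.Contr.betav (ds A) (nat B) (nat_isValue B))))
                (subst_mono A.size A le_rfl 0 B).1
            refine ⟨dsPart, ?_⟩
            rw [e2]
            exact Relation.ReflTransGen.trans (Tm.stepsFreeze dsPart)
              (freeze_ds (A.subst 0 B))
        | eta _ =>
            have hne : ∀ B, Lam.app (N.lift 0) (.var 0) = .app (.var 0) B →
                B.hasVar 0 = true := by
              intro B hEq
              simp only [Lam.app.injEq] at hEq
              exfalso
              cases N <;> simp [Lam.lift] at hEq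
            have e2 : ds (Lam.app (N.lift 0) (.var 0))
                = .app ((nat N).lift 0) (.var 0) := by
              simp [ds, nat, nat_lift]
            constructor
            · rw [ds_lam_eq _ hne, e2]
              exact Relation.ReflTransGen.trans
                (Relation.ReflTransGen.single
                  (Tm.Step.thaw (Tm.Step.contr (Tm.Contr.etav (nat N) (nat_isValue N)))))
                (thaw_nat N)
            · have e3 : nat (Lam.lam (.app (N.lift 0) (.var 0)))
                  = .lam (.app ((nat N).lift 0) (.var 0)) := by
                rw [show nat (Lam.lam (.app (N.lift 0) (.var 0)))
                    = .lam (ds (.app (N.lift 0) (.var 0))) by simp [nat], e2]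
              rw [e3]
              exact Relation.ReflTransGen.single
                (Tm.Step.contr (Tm.Contr.etav (nat N) (nat_isValue N)))
    | lam h' =>
        rename_i A B
        have hA : A.size ≤ n := by simp [Lam.size] at hM; omega
        have IH := ih A B hA h'
        have natPart : Tm.Steps (nat (Lam.lam A)) (nat (Lam.lam B)) := by
          simp only [nat]
          exact Tm.stepsLam IH.1
        refine ⟨?_, natPart⟩
        by_cases hsp : ∃ B0, A = .app (.var 0) B0 ∧ B0.hasVar 0 = false
        · obtain ⟨B0, rfl, hB0⟩ := hsp
          cases h' with
          | contr c => cases c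
          | appL hs => exact absurd hs (fun hs => Lam.var_no_step hs)
          | appR hs =>
              rename_i B1
              have hB1 : B1.hasVar 0 = false := Lam.step_hasVar hs 0 hB0
              have hsz : (B0.lower 0).size ≤ n := by
                rw [Lam.size_lower]; simp [Lam.size] at hM; omega
              have e1 : ds (Lam.lam (.app (.var 0) B0)) = nat (B0.lower 0) := by
                simp [ds, hB0]
              have e2 : ds (Lam.lam (.app (.var 0) B1)) = nat (B1.lower 0) := by
                simp [ds, hB1]
              rw [e1, e2]
              exact (ih _ _ hsz (Lam.step_lower hs 0)).2
        · have hgen : ∀ B0, A = .app (.var 0) B0 → B0.hasVar 0 = true := by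
            intro B0 hAB
            by_contra hf
            exact hsp ⟨B0, hAB, by revert hf; cases B0.hasVar 0 <;> simp⟩
          rw [ds_lam_eq _ hgen]
          exact Relation.ReflTransGen.trans
            (Tm.stepsThaw (Tm.stepsLam IH.1)) (thaw_lam_ds B)
    | appL h' =>
        rename_i A B C
        have hA : A.size ≤ n := by simp [Lam.size] at hM; omega
        have IH := ih A B hA h'
        constructor
        · simp only [ds]
          exact Tm.stepsApp IH.2 Relation.ReflTransGen.refl
        · simp only [nat]
          exact Tm.stepsFreeze (Tm.stepsApp IH.2 Relation.ReflTransGen.refl)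
    | appR h' =>
        rename_i A B C
        have hA : A.size ≤ n := by simp [Lam.size] at hM; omega
        have IH := ih A B hA h'
        constructor
        · simp only [ds]
          exact Tm.stepsApp Relation.ReflTransGen.refl IH.2
        · simp only [nat]
          exact Tm.stepsFreeze (Tm.stepsApp Relation.ReflTransGen.refl IH.2)

end Shift0

namespace Shift0

/-- **Monotonicity of `#` and `♮`.**  If `M ↠λ N` then `M# ↠Λ$ N#` and
`M♮ ↠Λ$ N♮`. -/
theorem ds_monotone (M N : Lam) (h : Lam.Steps M N) :
    Tm.Steps (ds M) (ds N) ∧ Tm.Steps (nat M) (nat N) := by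
  induction h with
  | refl => exact ⟨Relation.ReflTransGen.refl, Relation.ReflTransGen.refl⟩
  | tail _ hstep ihs =>
      have key := mono_step _ _ _ le_rfl hstep
      exact ⟨Relation.ReflTransGen.trans ihs.1 key.1,
        Relation.ReflTransGen.trans ihs.2 key.2⟩

end Shift0
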